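/- Let ℍ = {ζ ∈ ℂ : Re ζ > 0} be the right half-plane. For any two points p, q on the positive real axis with 0 < q < p, the Poincaré/Kobayashi distance of ℍ and of the disc Δ(p, p) centered at p of radius p satisfy: d^K_{Δ(p,p)}(p, q) ≤ d^K_{ℍ}(p, q) + log 2. -/

import Mathlib

open Set Metric

/-- The Kobayashi infinitesimal pseudometric of a domain `D` in a complex normed space. -/
noncomputable def kobMetric {E : Type*} [NormedAddCommGroup E] [NormedSpace ℂ E]
    (D : Set E) (p v : E) : ℝ :=
  sInf {α : ℝ | 0 < α ∧ ∃ f : ℂ → E, DifferentiableOn ℂ f (ball (0:ℂ) 1) ∧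
    MapsTo f (ball (0:ℂ) 1) D ∧ f 0 = p ∧ fderiv ℂ f 0 1 = α⁻¹ • v}

/-- The Kobayashi length of a path `γ : [0,1] → D`. -/
noncomputable def kobLength {E : Type*} [NormedAddCommGroup E] [NormedSpace ℂ E]
    (D : Set E) (γ : ℝ → E) : ℝ :=
  ∫ t in (0:ℝ)..1, kobMetric D (γ t) (derivWithin γ (Icc 0 1) t)

/-- The (integrated) Kobayashi pseudodistance of `D`: the infimum of Kobayashi lengths of
`C¹` paths in `D` joining `p` to `q`. -/
noncomputable def kobDist {E : Type*} [NormedAddCommGroup E] [NormedSpace ℂ E]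
    (D : Set E) (p q : E) : ℝ :=
  sInf {L : ℝ | ∃ γ : ℝ → E, ContDiffOn ℝ 1 γ (Icc 0 1) ∧ MapsTo γ (Icc 0 1) D ∧
    γ 0 = p ∧ γ 1 = q ∧ L = kobLength D γ}

lemma kobMetric_nonneg {E : Type*} [NormedAddCommGroup E] [NormedSpace ℂ E]
    (D : Set E) (p v : E) : 0 ≤ kobMetric D p v :=
  Real.sInf_nonneg (fun _ hα => hα.1.le)

lemma kobSet_bddBelow {E : Type*} [NormedAddCommGroup E] [NormedSpace ℂ E]
    (D : Set E) (p v : E) :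
    BddBelow {α : ℝ | 0 < α ∧ ∃ f : ℂ → E, DifferentiableOn ℂ f (ball (0:ℂ) 1) ∧
      MapsTo f (ball (0:ℂ) 1) D ∧ f 0 = p ∧ fderiv ℂ f 0 1 = α⁻¹ • v} :=
  ⟨0, fun _ hα => hα.1.le⟩

lemma kobLength_nonneg {E : Type*} [NormedAddCommGroup E] [NormedSpace ℂ E]
    (D : Set E) (γ : ℝ → E) : 0 ≤ kobLength D γ :=
  intervalIntegral.integral_nonneg zero_le_one (fun t _ => kobMetric_nonneg D _ _)

lemma halfplane_mem (z v : ℂ) (hz : 0 < z.re) (hv : v ≠ 0) :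
    (‖v‖ / (2 * z.re)) ∈ {α : ℝ | 0 < α ∧ ∃ f : ℂ → ℂ,
      DifferentiableOn ℂ f (ball (0:ℂ) 1) ∧
      MapsTo f (ball (0:ℂ) 1) {ζ : ℂ | 0 < ζ.re} ∧ f 0 = z ∧
      fderiv ℂ f 0 1 = α⁻¹ • v} := by
  have hvn : (0:ℝ) < ‖v‖ := norm_pos_iff.2 hv
  set l : ℂ := v / ‖v‖ with hl
  have hln : ‖l‖ = 1 := by
    field_simp [hl]
    rw [hl, norm_div, Complex.norm_real, norm_norm]; exact div_self (norm_ne_zero_iff.2 hv)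
  set f : ℂ → ℂ := fun u => (z + (starRingEnd ℂ) z * (l * u)) / (1 - l * u) with hf
  have hden : ∀ u ∈ ball (0:ℂ) 1, (1 : ℂ) - l * u ≠ 0 := by
    intro u hu
    have : ‖l * u‖ < 1 := by
      rw [norm_mul, hln, one_mul]; simpa using hu
    intro h
    have h1 : l * u = 1 := by linear_combination -h
    rw [h1] at this; simp at this
  refine ⟨by positivity, f, ?_, ?_, ?_, ?_⟩
  · exact DifferentiableOn.div
      (((differentiable_const _).add ((differentiable_id.const_mul l).const_mul _)).differentiableOn)
      ((differentiable_const (1:ℂ)).sub (differentiable_id.const_mul l)).differentiableOn hden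
  · intro u hu
    set w : ℂ := l * u with hw
    have hwn : Complex.normSq w < 1 := by
      have : ‖w‖ < 1 := by rw [hw, norm_mul, hln, one_mul]; simpa using hu
      have h2 : Complex.normSq w = ‖w‖^2 := by
        rw [Complex.normSq_eq_norm_sq]
      nlinarith [norm_nonneg w]
    have hne : (1:ℂ) - w ≠ 0 := hden u hu
    have hpos : 0 < Complex.normSq (1 - w) := Complex.normSq_pos.2 hne
    show 0 < ((z + (starRingEnd ℂ) z * w) / (1 - w)).re
    rw [Complex.div_re]
    have hnum : (z + (starRingEnd ℂ) z * w).re * (1 - w).re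
        + (z + (starRingEnd ℂ) z * w).im * (1 - w).im
        = z.re * (1 - Complex.normSq w) := by
      simp [Complex.normSq_apply, Complex.mul_re, Complex.mul_im]
      ring
    rw [← add_div, hnum]
    exact div_pos (mul_pos hz (by linarith)) hpos
  · simp [hf]
  · have h0 : (0:ℂ) ∈ ball (0:ℂ) 1 := by simp
    have hD : HasDerivAt f (l * (z + (starRingEnd ℂ) z)) 0 := by
      have hnum : HasDerivAt (fun u : ℂ => z + (starRingEnd ℂ) z * (l * u))
          ((starRingEnd ℂ) z * l) 0 := by
        simpa [mul_comm, mul_assoc] using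
          (((hasDerivAt_id (0:ℂ)).const_mul l).const_mul ((starRingEnd ℂ) z)).const_add z
      have hd2 : HasDerivAt (fun u : ℂ => (1:ℂ) - l * u) (-l) 0 := by
        simpa using ((hasDerivAt_id (0:ℂ)).const_mul l).const_sub 1
      have := hnum.div hd2 (by simpa using hden 0 h0)
      refine this.congr_deriv ?_
      simp
      ring
    have hfd : fderiv ℂ f 0 1 = l * (z + (starRingEnd ℂ) z) := by
      simp [hD.deriv]
    rw [hfd, Complex.add_conj]
    rw [Complex.real_smul]
    push_cast
    rw [hl]
    field_simp

lemma kobMetric_halfplane_eq (z v : ℂ) (hz : 0 < z.re) :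
    kobMetric {ζ : ℂ | 0 < ζ.re} z v = ‖v‖ / (2 * z.re) := by
  rcases eq_or_ne v 0 with hv | hv
  · subst hv
    refine le_antisymm ?_ (by simpa using kobMetric_nonneg {ζ : ℂ | 0 < ζ.re} z 0)
    have key : ∀ ε : ℝ, 0 < ε → kobMetric {ζ : ℂ | 0 < ζ.re} z 0 ≤ ε := by
      intro ε hε
      refine csInf_le (kobSet_bddBelow _ _ _) ⟨hε, fun _ => z, ?_, ?_, rfl, ?_⟩
      · exact (differentiable_const z).differentiableOn
      · intro u _; exact hz
      · simp [fderiv_const]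
    simp only [norm_zero, zero_div]
    exact le_of_forall_pos_le_add (fun ε hε => by simpa using key ε hε)
  · refine le_antisymm (csInf_le (kobSet_bddBelow _ _ _) (halfplane_mem z v hz hv)) ?_
    refine le_csInf ⟨_, halfplane_mem z v hz hv⟩ ?_
    rintro α ⟨hα, f, hdf, hmaps, hf0, hder⟩
    set g : ℂ → ℂ := fun u => (f u - z) / (f u + (starRingEnd ℂ) z) with hg
    have hfre : ∀ u ∈ ball (0:ℂ) 1, 0 < (f u).re := fun u hu => hmaps hu
    have hdenne : ∀ u ∈ ball (0:ℂ) 1, f u + (starRingEnd ℂ) z ≠ 0 := by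
      intro u hu h
      have h1 : 0 < (f u + (starRingEnd ℂ) z).re := by
        simp only [Complex.add_re, Complex.conj_re]
        linarith [hfre u hu]
      rw [h] at h1; simp at h1
    have h0 : (0:ℂ) ∈ ball (0:ℂ) 1 := by simp
    have hgd : DifferentiableOn ℂ g (ball (0:ℂ) 1) :=
      ((hdf.sub (differentiableOn_const z)).div
        (hdf.add (differentiableOn_const _)) hdenne)
    have hg0 : g 0 = 0 := by simp [hg, hf0]
    have hzz : z + (starRingEnd ℂ) z ≠ 0 := by
      intro h
      have : (z + (starRingEnd ℂ) z).re = 0 := by rw [h]; simp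
      simp only [Complex.add_re, Complex.conj_re] at this
      linarith
    have hgmaps : MapsTo g (ball (0:ℂ) 1) (ball (g 0) 1) := by
      rw [hg0]
      intro u hu
      set w := f u with hw
      have hwre : 0 < w.re := hfre u hu
      have hlt : Complex.normSq (w - z) < Complex.normSq (w + (starRingEnd ℂ) z) := by
        simp only [Complex.normSq_apply, Complex.sub_re, Complex.sub_im, Complex.add_re,
          Complex.add_im, Complex.conj_re, Complex.conj_im]
        nlinarith [mul_pos hwre hz]
      have habs : ‖w - z‖ < ‖w + (starRingEnd ℂ) z‖ := by
        have h1 := Complex.sq_norm (w - z)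
        have h2 := Complex.sq_norm (w + (starRingEnd ℂ) z)
        nlinarith [norm_nonneg (w - z), norm_nonneg (w + (starRingEnd ℂ) z)]
      simp only [mem_ball, dist_zero_right, hg]
      rw [norm_div]
      rw [div_lt_one (norm_pos_iff.2 (hdenne u hu))]
      exact habs
    have hschwarz : ‖deriv g 0‖ ≤ 1 := by
      have := Complex.norm_deriv_le_div_of_mapsTo_ball hgd (hgmaps.mono_right ball_subset_closedBall) one_pos
      simpa using this
    have hd0 : DifferentiableAt ℂ f 0 := hdf.differentiableAt (isOpen_ball.mem_nhds h0)
    have hDf : HasDerivAt f (deriv f 0) 0 := hd0.hasDerivAt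
    have hDg : HasDerivAt g (deriv f 0 / (z + (starRingEnd ℂ) z)) 0 := by
      have := (hDf.sub_const z).div (hDf.add_const ((starRingEnd ℂ) z))
        (by rw [hf0]; exact hzz)
      refine this.congr_deriv ?_
      rw [hf0]
      field_simp
      ring
    have hderiv : deriv g 0 = deriv f 0 / (z + (starRingEnd ℂ) z) := hDg.deriv
    have hzn : ‖z + (starRingEnd ℂ) z‖ = 2 * z.re := by
      rw [Complex.add_conj]
      simp [abs_of_pos hz, Complex.norm_real, abs_of_pos]
    have hdval : deriv f 0 = α⁻¹ • v := by
      rw [← hder]; simp [fderiv_apply_one_eq_deriv]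
    have key : α⁻¹ * ‖v‖ / (2 * z.re) ≤ 1 := by
      have := hschwarz
      rw [hderiv, norm_div, hzn, hdval, norm_smul, Real.norm_eq_abs,
        abs_of_pos (inv_pos.2 hα)] at this
      simpa using this
    rw [div_le_iff₀ (by positivity)]
    rw [div_le_iff₀ (by positivity)] at key
    rw [inv_mul_eq_div, div_le_iff₀ hα] at key
    linarith [key]

lemma ball_mem (p q x : ℝ) (hq : 0 < q) (hqp : q < p) (hx1 : q ≤ x) (hx2 : x ≤ p) :
    (p * (p - q) / (x * (2*p - x))) ∈ {α : ℝ | 0 < α ∧ ∃ f : ℂ → ℂ,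
      DifferentiableOn ℂ f (ball (0:ℂ) 1) ∧
      MapsTo f (ball (0:ℂ) 1) (ball ((p:ℂ)) p) ∧ f 0 = (x:ℂ) ∧
      fderiv ℂ f 0 1 = α⁻¹ • ((q:ℂ) - (p:ℂ))} := by
  have hp : 0 < p := hq.trans hqp
  have hx0 : 0 < x := hq.trans_le hx1
  have h2px : 0 < 2*p - x := by linarith
  set a : ℝ := (x - p)/p with ha
  have ha2 : a^2 < 1 := by
    rw [div_pow, div_lt_one (by positivity)]
    nlinarith
  have haabs : |a| < 1 := by nlinarith [sq_abs a, abs_nonneg a]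
  set f : ℂ → ℂ := fun u => (p:ℂ) + (p:ℂ) * (((a:ℂ) - u) / (1 - (a:ℂ) * u)) with hf
  have hden : ∀ u ∈ ball (0:ℂ) 1, (1:ℂ) - (a:ℂ) * u ≠ 0 := by
    intro u hu h
    have h1 : (a:ℂ) * u = 1 := by linear_combination -h
    have : ‖(a:ℂ) * u‖ < 1 := by
      rw [norm_mul, Complex.norm_real]
      have hu1 : ‖u‖ < 1 := by simpa using hu
      calc |a| * ‖u‖ ≤ |a| * 1 := by
            exact mul_le_mul_of_nonneg_left hu1.le (abs_nonneg a)
        _ < 1 := by simpa using haabs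
    rw [h1] at this; simp at this
  refine ⟨div_pos (by nlinarith) (by nlinarith), f, ?_, ?_, ?_, ?_⟩
  · exact (differentiableOn_const _).add ((differentiableOn_const _).mul
      (((differentiableOn_const _).sub differentiableOn_id).div
        ((differentiableOn_const _).sub ((differentiableOn_id.const_mul _))) hden))
  · intro u hu
    have hu1 : ‖u‖ < 1 := by simpa using hu
    have hu1' : ‖u‖ < 1 := hu1
    have hnsq : Complex.normSq u < 1 := by
      have := Complex.sq_norm u
      nlinarith [norm_nonneg u, hu1']
    have hne := hden u hu
    have hlt : Complex.normSq ((a:ℂ) - u) < Complex.normSq (1 - (a:ℂ) * u) := by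
      simp only [Complex.normSq_apply, Complex.sub_re, Complex.sub_im, Complex.mul_re,
        Complex.mul_im, Complex.ofReal_re, Complex.ofReal_im, Complex.one_re, Complex.one_im]
      simp only [Complex.normSq_apply] at hnsq
      nlinarith [mul_pos (sub_pos.2 ha2) (by linarith : (0:ℝ) < 1 - (u.re*u.re + u.im*u.im))]
    have habs : ‖(a:ℂ) - u‖ < ‖1 - (a:ℂ) * u‖ := by
      have h1 := Complex.sq_norm ((a:ℂ) - u)
      have h2 := Complex.sq_norm (1 - (a:ℂ) * u)
      nlinarith [norm_nonneg ((a:ℂ) - u), norm_nonneg (1 - (a:ℂ) * u)]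
    simp only [mem_ball, hf]
    rw [Complex.dist_eq]
    have : (p:ℂ) + (p:ℂ) * (((a:ℂ) - u) / (1 - (a:ℂ) * u)) - (p:ℂ)
        = (p:ℂ) * (((a:ℂ) - u) / (1 - (a:ℂ) * u)) := by ring
    rw [this, norm_mul, norm_div]
    have : ‖(p:ℂ)‖ = p := by
      rw [Complex.norm_real, Real.norm_eq_abs, abs_of_pos hp]
    rw [this]
    calc p * (‖(a:ℂ) - u‖ / ‖1 - (a:ℂ) * u‖)
        < p * 1 := by
          apply mul_lt_mul_of_pos_left _ hp
          rw [div_lt_one (norm_pos_iff.2 hne)]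
          exact habs
      _ = p := mul_one p
  · have hpc : (p:ℂ) ≠ 0 := by exact_mod_cast hp.ne'
    show (p:ℂ) + (p:ℂ) * (((a:ℂ) - 0) / (1 - (a:ℂ) * 0)) = (x:ℂ)
    rw [ha]
    push_cast
    field_simp
    simp only [mul_zero, sub_zero]
    field_simp
    ring
  · have h0 : (0:ℂ) ∈ ball (0:ℂ) 1 := by simp
    have hD : HasDerivAt f ((p:ℂ) * ((a:ℂ)^2 - 1)) 0 := by
      have hnum : HasDerivAt (fun u : ℂ => (a:ℂ) - u) (-1) 0 := by
        simpa using (hasDerivAt_id (0:ℂ)).const_sub (a:ℂ)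
      have hd2 : HasDerivAt (fun u : ℂ => (1:ℂ) - (a:ℂ) * u) (-(a:ℂ)) 0 := by
        simpa using ((hasDerivAt_id (0:ℂ)).const_mul (a:ℂ)).const_sub 1
      have hq0 := (hnum.div hd2 (by simpa using hden 0 h0)).const_mul (p:ℂ)
      have := hq0.const_add (p:ℂ)
      refine this.congr_deriv ?_
      norm_num
      exact Or.inl (by ring)
    rw [hD.hasFDerivAt.fderiv]
    simp only [ContinuousLinearMap.smulRight_apply, ContinuousLinearMap.toSpanSingleton_apply, ContinuousLinearMap.one_apply, one_smul]
    rw [Complex.real_smul, ha]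
    have harith : p * (((x - p) / p)^2 - 1) = (p * (p - q) / (x * (2*p - x)))⁻¹ * (q - p) := by
      rw [inv_div]
      have hpq : p - q ≠ 0 := sub_ne_zero.2 hqp.ne'
      field_simp
      ring
    exact_mod_cast harith

/-- Let `ℍ = {Re ζ > 0}` and `0 < q < p` real. Then the Kobayashi (Poincaré)
distances of `ℍ` and of the disc `Δ(p, p) = ball p p ⊆ ℍ` satisfy
`d^K_{Δ(p,p)}(p, q) ≤ d^K_ℍ(p, q) + log 2`. -/
theorem disc_halfplane_comparison
    (p q : ℝ) (hq : 0 < q) (hqp : q < p) :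
    kobDist (ball ((p : ℂ)) p) (p : ℂ) (q : ℂ) ≤
      kobDist {ζ : ℂ | 0 < ζ.re} (p : ℂ) (q : ℂ) + Real.log 2 := by
  have hp : 0 < p := hq.trans hqp
  -- the straight path from p to q
  set γ : ℝ → ℂ := fun t => (p:ℂ) + (t:ℂ) * ((q:ℂ) - (p:ℂ)) with hγ
  have hγt : ∀ t : ℝ, γ t = ((p + t*(q-p) : ℝ) : ℂ) := by
    intro t; rw [hγ]; push_cast; ring
  have hγre : ∀ t : ℝ, (γ t).re = p + t*(q-p) := by
    intro t; rw [hγt t, Complex.ofReal_re]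
  have hxlb : ∀ t ∈ Icc (0:ℝ) 1, q ≤ p + t*(q-p) := by
    intro t ht; nlinarith [ht.1, ht.2]
  have hxub : ∀ t ∈ Icc (0:ℝ) 1, p + t*(q-p) ≤ p := by
    intro t ht; nlinarith [ht.1, ht.2]
  have hC1 : ContDiffOn ℝ 1 γ (Icc 0 1) := by
    apply ContDiff.contDiffOn
    exact contDiff_const.add ((Complex.ofRealCLM.contDiff).mul contDiff_const)
  have hDγ : ∀ t : ℝ, HasDerivAt γ ((q:ℂ) - (p:ℂ)) t := by
    intro t
    have h1 : HasDerivAt (fun t : ℝ => ((t:ℝ):ℂ)) 1 t := by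
      simpa using (hasDerivAt_id t).ofReal_comp
    simpa [hγ] using (h1.mul_const ((q:ℂ) - (p:ℂ))).const_add (p:ℂ)
  have hdW : ∀ t ∈ Icc (0:ℝ) 1, derivWithin γ (Icc 0 1) t = (q:ℂ) - (p:ℂ) := by
    intro t ht
    exact (hDγ t).hasDerivWithinAt.derivWithin (uniqueDiffOn_Icc zero_lt_one t ht)
  have hγ0 : γ 0 = (p:ℂ) := by rw [hγt]; norm_num
  have hγ1 : γ 1 = (q:ℂ) := by rw [hγt]; norm_num
  -- lower bound for the half-plane Kobayashi distance
  have hH : (Real.log p - Real.log q)/2 ≤ kobDist {ζ : ℂ | 0 < ζ.re} (p:ℂ) (q:ℂ) := by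
    have hmapsH : MapsTo γ (Icc 0 1) {ζ : ℂ | 0 < ζ.re} := by
      intro t ht
      show 0 < (γ t).re
      rw [hγre]
      have := hxlb t ht
      linarith
    refine le_csInf ⟨_, γ, hC1, hmapsH, hγ0, hγ1, rfl⟩ ?_
    rintro L ⟨σ, hσC1, hσmaps, hσ0, hσ1, rfl⟩
    have hσre : ∀ t ∈ Icc (0:ℝ) 1, 0 < (σ t).re := fun t ht => hσmaps ht
    set d : ℝ → ℂ := derivWithin σ (Icc 0 1) with hd
    have hdc : ContinuousOn d (Icc 0 1) :=
      hσC1.continuousOn_derivWithin (uniqueDiffOn_Icc zero_lt_one) le_rfl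
    have hσc : ContinuousOn σ (Icc 0 1) := hσC1.continuousOn
    have hσrec : ContinuousOn (fun t => (σ t).re) (Icc 0 1) :=
      Complex.continuous_re.comp_continuousOn hσc
    set h : ℝ → ℝ := fun t => ‖d t‖ / (2 * (σ t).re) with hh
    have hEq : EqOn (fun t => kobMetric {ζ : ℂ | 0 < ζ.re} (σ t) (d t)) h (uIcc 0 1) := by
      intro t ht
      rw [uIcc_of_le zero_le_one] at ht
      exact kobMetric_halfplane_eq (σ t) (d t) (hσre t ht)
    have hhc : ContinuousOn h (Icc 0 1) := by
      apply hdc.norm.div (continuousOn_const.mul hσrec)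
      intro t ht
      have := hσre t ht
      show 2 * (σ t).re ≠ 0
      positivity
    have hhint : IntervalIntegrable h MeasureTheory.volume 0 1 := by
      apply ContinuousOn.intervalIntegrable
      rwa [uIcc_of_le zero_le_one]
    set g' : ℝ → ℝ := fun t => -(((σ t).re)⁻¹ * (d t).re) / 2 with hg'
    have hg'c : ContinuousOn g' (Icc 0 1) := by
      apply ContinuousOn.div_const
      apply ContinuousOn.neg
      apply ContinuousOn.mul _ (Complex.continuous_re.comp_continuousOn hdc)
      exact hσrec.inv₀ (fun t ht => (hσre t ht).ne')
    have hg'int : IntervalIntegrable g' MeasureTheory.volume 0 1 := by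
      apply ContinuousOn.intervalIntegrable
      rwa [uIcc_of_le zero_le_one]
    set G : ℝ → ℝ := fun t => -(Real.log ((σ t).re)) / 2 with hG
    have hGc : ContinuousOn G (Icc 0 1) := by
      apply ContinuousOn.div_const
      apply ContinuousOn.neg
      exact hσrec.log (fun t ht => (hσre t ht).ne')
    have hGd : ∀ t ∈ Ioo (0:ℝ) 1, HasDerivWithinAt G (g' t) (Ioi t) t := by
      intro t ht
      have htI : t ∈ Icc (0:ℝ) 1 := Ioo_subset_Icc_self ht
      have hmem : Icc (0:ℝ) 1 ∈ nhds t := Icc_mem_nhds ht.1 ht.2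
      have hdiffAt : DifferentiableAt ℝ σ t :=
        ((hσC1.differentiableOn one_ne_zero) t htI).differentiableAt hmem
      have hder : HasDerivAt σ (d t) t := by
        have : d t = deriv σ t := by
          rw [hd]; exact derivWithin_of_mem_nhds hmem
        rw [this]; exact hdiffAt.hasDerivAt
      have hre' : HasDerivAt (fun s => (σ s).re) ((d t).re) t := by
        simpa [Function.comp_def] using (Complex.reCLM.hasFDerivAt.comp t hder.hasFDerivAt).hasDerivAt
      have hlog : HasDerivAt (fun s => Real.log ((σ s).re))
          (((σ t).re)⁻¹ * (d t).re) t := by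
        have := (Real.hasDerivAt_log (hσre t htI).ne').comp t hre'
        simpa [div_eq_inv_mul, Function.comp_def] using this
      exact ((hlog.neg.div_const 2)).hasDerivWithinAt
    have hFTC : ∫ t in (0:ℝ)..1, g' t = G 1 - G 0 :=
      intervalIntegral.integral_eq_sub_of_hasDeriv_right_of_le zero_le_one hGc hGd hg'int
    have hmono : ∀ t ∈ Icc (0:ℝ) 1, g' t ≤ h t := by
      intro t ht
      have hx := hσre t ht
      have hcre : -(d t).re ≤ ‖d t‖ :=
        (neg_le_abs _).trans (Complex.abs_re_le_norm (d t))
      have e1 : g' t = (-(d t).re) / (2 * (σ t).re) := by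
        show -(((σ t).re)⁻¹ * (d t).re) / 2 = (-(d t).re) / (2 * (σ t).re)
        rw [inv_mul_eq_div, neg_div, div_div]
        ring_nf
      rw [e1]
      show (-(d t).re) / (2 * (σ t).re) ≤ ‖d t‖ / (2 * (σ t).re)
      gcongr
    have hcong : kobLength {ζ : ℂ | 0 < ζ.re} σ = ∫ t in (0:ℝ)..1, h t := by
      rw [kobLength]; exact intervalIntegral.integral_congr hEq
    have hmono' := intervalIntegral.integral_mono_on zero_le_one hg'int hhint hmono
    have hG10 : G 1 - G 0 = (Real.log p - Real.log q)/2 := by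
      rw [hG]
      simp only [hσ1, hσ0, Complex.ofReal_re]
      ring
    rw [hcong]
    calc (Real.log p - Real.log q)/2 = G 1 - G 0 := hG10.symm
      _ = ∫ t in (0:ℝ)..1, g' t := hFTC.symm
      _ ≤ ∫ t in (0:ℝ)..1, h t := hmono'
  -- upper bound for the ball Kobayashi distance
  have hball : kobDist (ball ((p:ℂ)) p) (p:ℂ) (q:ℂ) ≤ (Real.log (2*p - q) - Real.log q)/2 := by
    have hmapsB : MapsTo γ (Icc 0 1) (ball ((p:ℂ)) p) := by
      intro t ht
      rw [mem_ball, hγt t, Complex.dist_eq]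
      have e : ((p + t*(q-p):ℝ):ℂ) - (p:ℂ) = ((t*(q-p):ℝ):ℂ) := by push_cast; ring
      rw [e, Complex.norm_real, Real.norm_eq_abs, abs_of_nonpos (by nlinarith [ht.1, ht.2])]
      nlinarith [ht.1, ht.2]
    have hbdd : BddBelow {L : ℝ | ∃ σ : ℝ → ℂ, ContDiffOn ℝ 1 σ (Icc 0 1) ∧
        MapsTo σ (Icc 0 1) (ball ((p:ℂ)) p) ∧ σ 0 = (p:ℂ) ∧ σ 1 = (q:ℂ) ∧
        L = kobLength (ball ((p:ℂ)) p) σ} := by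
      refine ⟨0, ?_⟩
      rintro L ⟨σ, _, _, _, _, rfl⟩
      exact kobLength_nonneg _ _
    refine le_trans (csInf_le hbdd ⟨γ, hC1, hmapsB, hγ0, hγ1, rfl⟩) ?_
    set F : ℝ → ℝ := fun t => kobMetric (ball ((p:ℂ)) p) (γ t) (derivWithin γ (Icc 0 1) t)
      with hF
    set g : ℝ → ℝ := fun t => p*(p-q)/((p + t*(q-p))*(2*p - (p + t*(q-p)))) with hgdef
    have hFg : ∀ t ∈ Icc (0:ℝ) 1, F t ≤ g t := by
      intro t ht
      have e := hdW t ht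
      rw [hF]
      simp only []
      rw [e, hγt t]
      exact csInf_le (kobSet_bddBelow _ _ _)
        (ball_mem p q (p + t*(q-p)) hq hqp (hxlb t ht) (hxub t ht))
    have hdenpos : ∀ t ∈ Icc (0:ℝ) 1, 0 < (p + t*(q-p))*(2*p - (p + t*(q-p))) := by
      intro t ht
      have := hxlb t ht
      have := hxub t ht
      have h1 : 0 < p + t*(q-p) := by linarith
      have h2 : 0 < 2*p - (p + t*(q-p)) := by linarith
      positivity
    have hgc : ContinuousOn g (Icc 0 1) := by
      apply continuousOn_const.div
      · exact ((continuous_const.add (continuous_id.mul continuous_const)).mul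
          (continuous_const.sub (continuous_const.add
            (continuous_id.mul continuous_const)))).continuousOn
      · intro t ht
        exact (hdenpos t ht).ne'
    have hgint : IntervalIntegrable g MeasureTheory.volume 0 1 := by
      apply ContinuousOn.intervalIntegrable
      rwa [uIcc_of_le zero_le_one]
    set Φ : ℝ → ℝ := fun t =>
      (Real.log (2*p - (p + t*(q-p))) - Real.log (p + t*(q-p)))/2 with hΦdef
    have hΦd : ∀ t ∈ uIcc (0:ℝ) 1, HasDerivAt Φ (g t) t := by
      intro t ht
      rw [uIcc_of_le zero_le_one] at ht
      have hx1' := hxlb t ht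
      have hx2' := hxub t ht
      have hxpos : 0 < p + t*(q-p) := by linarith
      have h2pos : 0 < 2*p - (p + t*(q-p)) := by linarith
      have hxd : HasDerivAt (fun s:ℝ => p + s*(q-p)) (q-p) t := by
        simpa using ((hasDerivAt_id t).mul_const (q-p)).const_add p
      have h2d : HasDerivAt (fun s:ℝ => 2*p - (p + s*(q-p))) (-(q-p)) t :=
        hxd.const_sub (2*p)
      have hl1 : HasDerivAt (fun s => Real.log (2*p - (p + s*(q-p))))
          ((2*p - (p + t*(q-p)))⁻¹ * (-(q-p))) t := by
        simpa [Function.comp_def] using (Real.hasDerivAt_log h2pos.ne').comp t h2d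
      have hl2 : HasDerivAt (fun s => Real.log (p + s*(q-p)))
          ((p + t*(q-p))⁻¹ * (q-p)) t := by
        simpa [Function.comp_def] using (Real.hasDerivAt_log hxpos.ne').comp t hxd
      have hcomb := (hl1.sub hl2).div_const 2
      have heq : ((2*p - (p + t*(q-p)))⁻¹ * (-(q-p)) - (p + t*(q-p))⁻¹ * (q-p))/2 = g t := by
        rw [hgdef]
        field_simp
        ring
      rw [hΦdef]
      rw [← heq]
      exact hcomb
    have hFTC2 : ∫ t in (0:ℝ)..1, g t = Φ 1 - Φ 0 :=
      intervalIntegral.integral_eq_sub_of_hasDerivAt hΦd hgint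
    have hval : Φ 1 - Φ 0 = (Real.log (2*p - q) - Real.log q)/2 := by
      rw [hΦdef]
      simp only []
      have e1 : 2*p - (p + 1*(q-p)) = 2*p - q := by ring
      have e2 : p + 1*(q-p) = q := by ring
      have e3 : 2*p - (p + 0*(q-p)) = p := by ring
      have e4 : p + 0*(q-p) = p := by ring
      rw [e1, e2, e3, e4]
      ring
    by_cases hFi : IntervalIntegrable F MeasureTheory.volume 0 1
    · rw [kobLength]
      calc (∫ t in (0:ℝ)..1, kobMetric (ball ((p:ℂ)) p) (γ t) (derivWithin γ (Icc 0 1) t))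
          ≤ ∫ t in (0:ℝ)..1, g t :=
            intervalIntegral.integral_mono_on zero_le_one hFi hgint hFg
        _ = (Real.log (2*p - q) - Real.log q)/2 := by rw [hFTC2, hval]
    · rw [kobLength, intervalIntegral.integral_undef hFi]
      have : Real.log q ≤ Real.log (2*p - q) := Real.log_le_log hq (by linarith)
      linarith
  -- final arithmetic
  have harith : (Real.log (2*p - q) - Real.log q)/2 ≤ (Real.log p - Real.log q)/2 + Real.log 2 := by
    have h1 : Real.log (2*p - q) ≤ Real.log (4*p) := Real.log_le_log (by linarith) (by linarith)
    have h2 : Real.log (4*p) = Real.log 4 + Real.log p := Real.log_mul (by norm_num) hp.ne'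
    have h3 : Real.log 4 = 2 * Real.log 2 := by
      rw [show (4:ℝ) = 2^2 by norm_num, Real.log_pow]
      push_cast
      ring
    linarith
  linarith [hball, hH, harith]
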